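/- Two rotor configurations ρ1 and ρ2 on G are equivalent (ρ1 ≡ ρ2) if and only if there exists a rotor configuration accessible from both ρ1 and ρ2 by sequences of cycle pushing moves. -/

import Mathlib

open Function

/-- A strongly connected finite directed multigraph (self-loops and multiple arcs
allowed), given by source and head maps `src, head : E → V`, together with a nonempty
target set `T` and a rotor mechanism at each vertex: `next` is a cyclic ordering of
the arcs emanating from each vertex (it permutes the arcs, preserves the source, and
acts transitively on the arcs emanating from any fixed vertex). -/
structure RotorSystem (V E : Type) [Fintype V] [DecidableEq V] [Fintype E]
    [DecidableEq E] where
  src : E → V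
  head : E → V
  T : Finset V
  T_nonempty : T.Nonempty
  strongly_connected : ∀ v w : V,
    Relation.ReflTransGen (fun a b => ∃ e : E, src e = a ∧ head e = b) v w
  next : E → E
  next_src : ∀ e, src (next e) = src e
  next_bijective : Function.Bijective next
  next_cyclic : ∀ e e', src e = src e' → ∃ k : ℕ, next^[k] e = e'

namespace RotorSystem

variable {V E : Type} [Fintype V] [DecidableEq V] [Fintype E] [DecidableEq E]

/-- The set `V₀ = V - T` of non-target vertices. -/
abbrev V0 (S : RotorSystem V E) : Type := {v : V // v ∉ S.T}

/-- A rotor configuration: each non-target vertex carries an arc emanating from it. -/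
abbrev RConf (S : RotorSystem V E) : Type :=
  {ρ : S.V0 → E // ∀ v : S.V0, S.src (ρ v) = v.1}

/-- A particle configuration: a number of particles at each non-target vertex. -/
abbrev PConf (S : RotorSystem V E) : Type := S.V0 → ℕ

variable (S : RotorSystem V E)

/-- One step of a single particle's rotor walk: at a non-target vertex the rotor is
first progressed and the particle then moves along the new rotor arc; target vertices
absorb the particle. -/
def step (p : V × S.RConf) : V × S.RConf :=
  if h : p.1 ∈ S.T then p
  else
    (S.head (S.next (p.2.1 ⟨p.1, h⟩)),
      ⟨Function.update p.2.1 ⟨p.1, h⟩ (S.next (p.2.1 ⟨p.1, h⟩)), by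
        intro w
        rcases eq_or_ne w ⟨p.1, h⟩ with rfl | hw
        · rw [Function.update_self, S.next_src]
          exact p.2.2 ⟨p.1, h⟩
        · rw [Function.update_of_ne hw]
          exact p.2.2 w⟩)

open Classical in
/-- Route a single particle from `x` by rotor walk until it first reaches the target
set; the result is the pair (final position, final rotor configuration). -/
noncomputable def route (x : V) (ρ : S.RConf) : V × S.RConf :=
  if h : ∃ n, (S.step^[n] (x, ρ)).1 ∈ S.T then S.step^[Nat.find h] (x, ρ) else (x, ρ)

/-- `t_x(ρ)`: the target vertex reached by a single particle started at `x` with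
initial rotor configuration `ρ`. -/
noncomputable def tgt (x : V) (ρ : S.RConf) : V := (S.route x ρ).1

/-- The particle addition operator `E_v`: add one particle at `v` and route it to the
target set. -/
noncomputable def addAt (v : S.V0) (ρ : S.RConf) : S.RConf := (S.route v.1 ρ).2

/-- The action `σρ` of a particle configuration on a rotor configuration: place
`σ v` particles at each vertex `v` and route them all to the target set. -/
noncomputable def act (σ : S.PConf) (ρ : S.RConf) : S.RConf :=
  (Finset.univ : Finset S.V0).toList.foldr (fun v r => (S.addAt v)^[σ v] r) ρ

/-- Equivalence of rotor configurations: `ρ ≡ ρ'` iff `σρ = σρ'` for some particle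
configuration `σ`. -/
def REquiv (ρ ρ' : S.RConf) : Prop := ∃ σ : S.PConf, S.act σ ρ = S.act σ ρ'

/-- The outdegree `d(v)`. -/
def outdeg (v : V) : ℕ := (Finset.univ.filter fun e : E => S.src e = v).card

/-- The number `d(v,w)` of arcs from `v` to `w`. -/
def numArcs (v w : V) : ℕ :=
  (Finset.univ.filter fun e : E => S.src e = v ∧ S.head e = w).card

/-- A particle configuration is stable if every non-target vertex holds at most
`d(v) - 1` particles. -/
def IsStable (σ : S.PConf) : Prop := ∀ v : S.V0, σ v < S.outdeg v.1

/-- Parallel toppling: every unstable vertex topples once, sending one particle along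
each arc emanating from it. -/
def toppleStep (σ : S.PConf) : S.PConf := fun v =>
  (if S.outdeg v.1 ≤ σ v then σ v - S.outdeg v.1 else σ v) +
    ∑ w : S.V0, (if S.outdeg w.1 ≤ σ w then S.numArcs w.1 v.1 else 0)

open Classical in
/-- The stabilization `σ°` of a particle configuration. -/
noncomputable def stabilize (σ : S.PConf) : S.PConf :=
  if h : ∃ n, S.IsStable (S.toppleStep^[n] σ) then S.toppleStep^[Nat.find h] σ else σ

/-- A stable particle configuration is recurrent if it is reachable (by adding
particles and stabilizing) from every particle configuration.  The recurrent
configurations form the sandpile group `S(G/T)` under addition-then-stabilization. -/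
def IsRecurrent (τ : S.PConf) : Prop :=
  S.IsStable τ ∧ ∀ σ : S.PConf, ∃ τ' : S.PConf, τ = S.stabilize (τ' + σ)

/-- `e` is the identity element of the sandpile group `S(G/T)`. -/
def IsSandpileIdentity (e : S.PConf) : Prop :=
  S.IsRecurrent e ∧ ∀ τ : S.PConf, S.IsRecurrent τ → S.stabilize (e + τ) = τ

/-- The rotor arcs of `ρ`, as a relation on vertices. -/
def rotorRel (ρ : S.RConf) (a b : V) : Prop :=
  ∃ h : a ∉ S.T, S.head (ρ.1 ⟨a, h⟩) = b

/-- A rotor configuration is acyclic if its rotor arcs contain no directed cycle. -/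
def IsAcyclicConf (ρ : S.RConf) : Prop :=
  ∀ v : V, ¬ Relation.TransGen (S.rotorRel ρ) v v

/-- `ρ'` is obtained from `ρ` by pushing a cycle: there are distinct non-target
vertices `v_0, …, v_{r-1}` with the rotor arc of `v_j` pointing to `v_{j+1}`
(cyclically); each such rotor is regressed one step, other rotors are unchanged. -/
def IsCyclePush (ρ ρ' : S.RConf) : Prop :=
  ∃ r : ℕ, 0 < r ∧ ∃ f : ZMod r → S.V0, Function.Injective f ∧
    (∀ j : ZMod r, S.head (ρ.1 (f j)) = (f (j + 1)).1) ∧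
    (∀ j : ZMod r, S.next (ρ'.1 (f j)) = ρ.1 (f j)) ∧
    (∀ v : S.V0, v ∉ Set.range f → ρ'.1 v = ρ.1 v)

/-! ### Auxiliary development -/

section Aux

variable (S : RotorSystem V E)

/-- `next` as an equivalence. -/
noncomputable def nextE : E ≃ E := Equiv.ofBijective S.next S.next_bijective

@[simp] lemma nextE_apply (e : E) : S.nextE e = S.next e := rfl

lemma next_nextE_symm (e : E) : S.next (S.nextE.symm e) = e :=
  S.nextE.apply_symm_apply e

lemma src_nextE_symm (e : E) : S.src (S.nextE.symm e) = S.src e := by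
  conv_rhs => rw [← S.next_nextE_symm e, S.next_src]

lemma next_injective : Function.Injective S.next := S.next_bijective.1

lemma next_iterate_injective (k : ℕ) : Function.Injective (S.next^[k]) :=
  Function.Injective.iterate S.next_injective k

lemma src_next_iterate (k : ℕ) (e : E) : S.src (S.next^[k] e) = S.src e := by
  induction k with
  | zero => rfl
  | succ k ih => rw [Function.iterate_succ_apply', S.next_src, ih]

lemma step_of_mem {p : V × S.RConf} (h : p.1 ∈ S.T) : S.step p = p := by
  simp [step, h]

lemma step_fst {p : V × S.RConf} (h : p.1 ∉ S.T) :
    (S.step p).1 = S.head (S.next (p.2.1 ⟨p.1, h⟩)) := by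
  simp [step, h]

lemma step_snd {p : V × S.RConf} (h : p.1 ∉ S.T) (u : S.V0) :
    (S.step p).2.1 u = if u = ⟨p.1, h⟩ then S.next (p.2.1 ⟨p.1, h⟩) else p.2.1 u := by
  simp only [step, h, dif_neg, not_false_iff]
  exact Function.update_apply _ _ _ _

/-- Number of exits from `x` strictly before time `n` in the walk from `s`. -/
def cnt (s : V × S.RConf) (x : V) (n : ℕ) : ℕ :=
  ((Finset.range n).filter (fun i => (S.step^[i] s).1 = x)).card

lemma cnt_zero (s : V × S.RConf) (x : V) : S.cnt s x 0 = 0 := by simp [cnt]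

lemma cnt_succ (s : V × S.RConf) (x : V) (n : ℕ) :
    S.cnt s x (n + 1) = S.cnt s x n + if (S.step^[n] s).1 = x then 1 else 0 := by
  simp only [cnt, Finset.range_add_one]
  rw [Finset.filter_insert]
  split
  · rw [Finset.card_insert_of_notMem (by simp)]
  · simp

lemma cnt_mono (s : V × S.RConf) (x : V) {m n : ℕ} (h : m ≤ n) :
    S.cnt s x m ≤ S.cnt s x n :=
  Finset.card_le_card (Finset.filter_subset_filter _ (Finset.range_subset_range.mpr h))

/-- Rotor evolution: the rotor at `u` after `n` steps is the initial rotor advanced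
by the number of exits from `u`. -/
lemma rotor_evol (s : V × S.RConf) (u : S.V0) (n : ℕ) :
    (S.step^[n] s).2.1 u = S.next^[S.cnt s u.1 n] (s.2.1 u) := by
  induction n with
  | zero => simp [cnt_zero]
  | succ n ih =>
    rw [Function.iterate_succ_apply', cnt_succ]
    by_cases h : (S.step^[n] s).1 ∈ S.T
    · rw [S.step_of_mem h, ih]
      have : ¬ ((S.step^[n] s).1 = u.1) := fun he => u.2 (he ▸ h)
      simp [this]
    · rw [S.step_snd h u]
      by_cases hu : u = ⟨(S.step^[n] s).1, h⟩
      · have hx : (S.step^[n] s).1 = u.1 := by rw [hu]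
        simp only [if_pos hu, if_pos hx]
        rw [← hu, ih, ← Function.iterate_succ_apply' S.next]
      · have hx : ¬ ((S.step^[n] s).1 = u.1) := by
          intro he; exact hu (Subtype.ext he.symm)
        simp only [if_neg hu, if_neg hx, ih, Nat.add_zero]

lemma pos_succ (s : V × S.RConf) (n : ℕ) (h : (S.step^[n] s).1 ∉ S.T) (u : S.V0)
    (hu : (S.step^[n] s).1 = u.1) :
    (S.step^[n + 1] s).1 = S.head (S.next^[S.cnt s u.1 n + 1] (s.2.1 u)) := by
  rw [Function.iterate_succ_apply', S.step_fst h]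
  have : (⟨(S.step^[n] s).1, h⟩ : S.V0) = u := Subtype.ext hu
  rw [this, S.rotor_evol s u n, ← Function.iterate_succ_apply' S.next]

/-- Intermediate value property for the exit counter. -/
lemma cnt_ivt (s : V × S.RConf) (x : V) :
    ∀ b a t, a ≤ b → S.cnt s x a ≤ t → t < S.cnt s x b →
      ∃ τ, a ≤ τ ∧ τ < b ∧ (S.step^[τ] s).1 = x ∧ S.cnt s x τ = t := by
  intro b
  induction b with
  | zero => intro a t _ h1 h2; rw [cnt_zero] at h2; omega
  | succ b ih =>
    intro a t hab h1 h2
    by_cases hab' : a ≤ b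
    · by_cases hc : t < S.cnt s x b
      · obtain ⟨τ, h3, h4, h5, h6⟩ := ih a t hab' h1 hc
        exact ⟨τ, h3, Nat.lt_succ_of_lt h4, h5, h6⟩
      · push_neg at hc
        rw [cnt_succ] at h2
        have hx : (S.step^[b] s).1 = x := by
          by_contra hxx; rw [if_neg hxx] at h2; omega
        rw [if_pos hx] at h2
        exact ⟨b, hab', Nat.lt_succ_self b, hx, by omega⟩
    · have ha : a = b + 1 := by omega
      subst ha; omega

/-- If `g^[p]` fixes `x` then iterates of `g` at `x` only depend on the index mod `p`. -/
lemma iterate_mod {α : Type*} (g : α → α) (x : α) (p : ℕ) (hfix : g^[p] x = x)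
    (k : ℕ) : g^[k] x = g^[k % p] x := by
  conv_lhs => rw [← Nat.mod_add_div k p]
  generalize k / p = m
  induction m with
  | zero => simp
  | succ m ih =>
    have : k % p + p * (m + 1) = (k % p + p * m) + p := by ring
    rw [this, Function.iterate_add_apply, hfix, ih]

/-- **Termination**: every rotor walk eventually reaches the target set. -/
theorem exists_hit (s : V × S.RConf) : ∃ n, (S.step^[n] s).1 ∈ S.T := by
  by_contra hc
  push_neg at hc
  -- pigeonhole on the finite state space
  obtain ⟨i', j', hne, heq⟩ :=
    Finite.exists_ne_map_eq_of_infinite (fun n : ℕ => S.step^[n] s)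
  -- wlog i < j
  obtain ⟨i, j, hij, heq⟩ : ∃ i j, i < j ∧ S.step^[i] s = S.step^[j] s := by
    rcases lt_or_gt_of_ne hne with h | h
    · exact ⟨i', j', h, heq⟩
    · exact ⟨j', i', h, heq.symm⟩
  set q := S.step^[i] s with hq
  set p := j - i with hp
  have hp0 : 0 < p := by omega
  have hfix : S.step^[p] q = q := by
    rw [hq, ← Function.iterate_add_apply, hp]
    have : j - i + i = j := by omega
    rw [this, ← heq]
  have hmod : ∀ k, S.step^[k] q = S.step^[k % p] q := fun k =>
    iterate_mod S.step q p hfix k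
  -- the set of positions visited in the periodic orbit
  set P : Finset V := (Finset.range p).image (fun k => (S.step^[k] q).1) with hP
  have hmemP : ∀ k, (S.step^[k] q).1 ∈ P := by
    intro k
    rw [hmod k, hP]
    exact Finset.mem_image.mpr ⟨k % p, Finset.mem_range.mpr (Nat.mod_lt _ hp0), rfl⟩
  have hPT : ∀ v ∈ P, v ∉ S.T := by
    intro v hv hvT
    obtain ⟨k, _, hk⟩ := Finset.mem_image.mp hv
    rw [hq, ← Function.iterate_add_apply] at hk
    exact hc (k + i) (hk ▸ hvT)
  -- closure of P under all arcs
  have hclosed : ∀ v ∈ P, ∀ e : E, S.src e = v → S.head e ∈ P := by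
    intro v hv e hsrc
    obtain ⟨k₀, hk₀, hk⟩ := Finset.mem_image.mp hv
    have hvT : v ∉ S.T := hPT v hv
    set u : S.V0 := ⟨v, hvT⟩ with hu
    set c1 := S.cnt q v k₀ with hc1
    set c2 := S.cnt q v (k₀ + p) with hc2
    have hcnt12 : c1 < c2 := by
      have h1 : S.cnt q v (k₀ + 1) = S.cnt q v k₀ + 1 := by
        rw [cnt_succ, if_pos hk]
      have h2 : S.cnt q v (k₀ + 1) ≤ c2 := S.cnt_mono q v (by omega)
      omega
    set r := (S.step^[k₀] q).2.1 u with hr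
    have hrevol : r = S.next^[c1] (q.2.1 u) := S.rotor_evol q u k₀
    have hfixr : S.next^[c2 - c1] r = r := by
      have h1 : (S.step^[k₀ + p] q).2.1 u = S.next^[c2] (q.2.1 u) := S.rotor_evol q u _
      have h2 : S.step^[k₀ + p] q = S.step^[k₀] q := by
        rw [hmod (k₀ + p), hmod k₀, Nat.add_mod_right]
      rw [h2, ← hr] at h1
      rw [hrevol, ← Function.iterate_add_apply]
      have : c2 - c1 + c1 = c2 := by omega
      rw [this, ← h1, hrevol]
    set eu := c2 - c1 with heu
    have heu0 : 0 < eu := by omega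
    -- find m' ∈ [1, eu] with next^[m'] r = e
    have hsrcr : S.src r = v := (S.step^[k₀] q).2.2 u
    obtain ⟨m, hm⟩ := S.next_cyclic r e (by rw [hsrcr, hsrc])
    have hmm : S.next^[m % eu] r = e := by rw [← iterate_mod S.next r eu hfixr m, hm]
    obtain ⟨m', hm'1, hm'2, hm'⟩ : ∃ m', 1 ≤ m' ∧ m' ≤ eu ∧ S.next^[m'] r = e := by
      by_cases h0 : m % eu = 0
      · exact ⟨eu, heu0, le_refl _, by rw [hfixr, ← hmm, h0, Function.iterate_zero_apply]⟩
      · exact ⟨m % eu, by omega, le_of_lt (Nat.mod_lt _ heu0), hmm⟩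
    -- counter intermediate value
    obtain ⟨τ, hτ1, hτ2, hτ3, hτ4⟩ :=
      S.cnt_ivt q v (k₀ + p) k₀ (c1 + (m' - 1)) (by omega) (by omega) (by omega)
    have hpos : (S.step^[τ + 1] q).1 = S.head (S.next^[S.cnt q v τ + 1] (q.2.1 u)) :=
      S.pos_succ q τ (by rw [hτ3]; exact hvT) u hτ3
    have : S.next^[S.cnt q v τ + 1] (q.2.1 u) = e := by
      rw [hτ4]
      have : c1 + (m' - 1) + 1 = m' + c1 := by omega
      rw [this, Function.iterate_add_apply, ← hrevol, hm']
    rw [this] at hpos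
    rw [← hpos]
    exact hmemP (τ + 1)
  -- strong connectivity gives a contradiction
  have hreach : ∀ w, Relation.ReflTransGen
      (fun a b => ∃ e : E, S.src e = a ∧ S.head e = b) q.1 w → w ∈ P := by
    intro w h
    induction h with
    | refl => exact hmemP 0
    | tail _ he ih =>
      obtain ⟨e, he1, he2⟩ := he
      exact he2 ▸ hclosed _ ih e he1
  obtain ⟨t₀, ht₀⟩ := S.T_nonempty
  exact hPT t₀ (hreach t₀ (S.strongly_connected q.1 t₀)) ht₀

/-- The hitting time of the target set. -/
noncomputable def hitT (s : V × S.RConf) : ℕ := Nat.find (S.exists_hit s)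

lemma hitT_spec (s : V × S.RConf) : (S.step^[S.hitT s] s).1 ∈ S.T :=
  Nat.find_spec (S.exists_hit s)

lemma hitT_min {s : V × S.RConf} {i : ℕ} (h : i < S.hitT s) :
    (S.step^[i] s).1 ∉ S.T := Nat.find_min (S.exists_hit s) h

lemma hitT_le {s : V × S.RConf} {n : ℕ} (h : (S.step^[n] s).1 ∈ S.T) :
    S.hitT s ≤ n := Nat.find_min' (S.exists_hit s) h

/-- The full routing map on states. -/
noncomputable def rt (s : V × S.RConf) : V × S.RConf := S.step^[S.hitT s] s

lemma rt_fst_mem (s : V × S.RConf) : (S.rt s).1 ∈ S.T := S.hitT_spec s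

lemma route_eq (x : V) (ρ : S.RConf) : S.route x ρ = S.rt (x, ρ) := by
  rw [route, dif_pos (S.exists_hit (x, ρ))]
  rw [rt]
  congr 1

lemma addAt_eq (v : S.V0) (ρ : S.RConf) : S.addAt v ρ = (S.rt (v.1, ρ)).2 := by
  rw [addAt, route_eq]

lemma hitT_shift {s : V × S.RConf} {a : ℕ}
    (h : ∀ i, i < a → (S.step^[i] s).1 ∉ S.T) :
    S.hitT s = a + S.hitT (S.step^[a] s) ∧ S.rt s = S.rt (S.step^[a] s) := by
  have ha : a ≤ S.hitT s := by
    by_contra hlt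
    exact h _ (by omega) (S.hitT_spec s)
  set b := S.hitT (S.step^[a] s) with hb
  have h1 : S.hitT s ≤ a + b := by
    apply S.hitT_le
    rw [Nat.add_comm, Function.iterate_add_apply]
    exact S.hitT_spec (S.step^[a] s)
  have h2 : b ≤ S.hitT s - a := by
    apply S.hitT_le
    rw [← Function.iterate_add_apply]
    have : S.hitT s - a + a = S.hitT s := by omega
    rw [this]
    exact S.hitT_spec s
  have heq : S.hitT s = a + b := by omega
  refine ⟨heq, ?_⟩
  rw [rt, rt, heq, Nat.add_comm, Function.iterate_add_apply]

lemma rt_of_mem {s : V × S.RConf} (h : s.1 ∈ S.T) : S.rt s = s := by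
  have : S.hitT s = 0 := Nat.le_zero.mp (S.hitT_le (by simpa using h))
  rw [rt, this, Function.iterate_zero_apply]

lemma frozen {s : V × S.RConf} {k : ℕ} (h : (S.step^[k] s).1 ∈ S.T) :
    ∀ l, k ≤ l → S.step^[l] s = S.step^[k] s := by
  intro l hl
  obtain ⟨d, rfl⟩ := Nat.exists_eq_add_of_le hl
  induction d with
  | zero => rfl
  | succ d ih =>
    have : k + (d + 1) = (k + d) + 1 := by ring
    rw [this, Function.iterate_succ_apply', ih (by omega)]
    rw [ih (by omega)] at *
    exact S.step_of_mem h

/-- Explicit data of a cycle push. -/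
def PushData (r : ℕ) (f : ZMod r → S.V0) (ρ ρ' : S.RConf) : Prop :=
  Function.Injective f ∧ (∀ j : ZMod r, S.head (ρ.1 (f j)) = (f (j + 1)).1) ∧
    (∀ j : ZMod r, S.next (ρ'.1 (f j)) = ρ.1 (f j)) ∧
    (∀ v : S.V0, v ∉ Set.range f → ρ'.1 v = ρ.1 v)

lemma isCyclePush_iff {ρ ρ' : S.RConf} :
    S.IsCyclePush ρ ρ' ↔ ∃ r : ℕ, 0 < r ∧ ∃ f : ZMod r → S.V0, S.PushData r f ρ ρ' :=
  Iff.rfl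

open Classical in
/-- Intermediate configuration while a pushed cycle is being traversed. -/
noncomputable def midConf {r : ℕ} (f : ZMod r → S.V0) (ρ ρ' : S.RConf)
    (j : ZMod r) (i : ℕ) : S.RConf :=
  ⟨fun v => if ∃ l : ℕ, l < i ∧ f (j + (l : ℕ)) = v then ρ.1 v else ρ'.1 v, by
    intro v; dsimp only; split
    · exact ρ.2 v
    · exact ρ'.2 v⟩

lemma midConf_zero {r : ℕ} (f : ZMod r → S.V0) (ρ ρ' : S.RConf) (j : ZMod r) :
    S.midConf f ρ ρ' j 0 = ρ' := by
  apply Subtype.ext; funext v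
  simp only [midConf]
  rw [if_neg (by rintro ⟨l, hl, -⟩; omega)]

/-- The basic merge lemma: traversing a pushed cycle returns to the unpushed
configuration. -/
lemma push_walk {r : ℕ} {f : ZMod r → S.V0} {ρ ρ' : S.RConf} (hr : 0 < r)
    (hd : S.PushData r f ρ ρ') (j : ZMod r) :
    ∀ i, i ≤ r → S.step^[i] ((f j).1, ρ') = ((f (j + (i : ℕ))).1, S.midConf f ρ ρ' j i) := by
  haveI : NeZero r := ⟨hr.ne'⟩
  obtain ⟨hinj, hhead, hreg, hoff⟩ := hd
  have hcast : ∀ {l i : ℕ}, l < r → i < r → (l : ZMod r) = (i : ZMod r) → l = i := by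
    intro l i hl hi he
    have := congrArg ZMod.val he
    rwa [ZMod.val_cast_of_lt hl, ZMod.val_cast_of_lt hi] at this
  intro i
  induction i with
  | zero =>
    intro _
    simp only [Function.iterate_zero_apply, Nat.cast_zero, add_zero, S.midConf_zero]
  | succ i ih =>
    intro hir
    have hi : i < r := by omega
    rw [Function.iterate_succ_apply', ih (by omega)]
    set u : S.V0 := f (j + (i : ℕ)) with hu
    have hpos : ((f (j + (i : ℕ))).1 : V) ∉ S.T := u.2
    have hmidu : (S.midConf f ρ ρ' j i).1 u = ρ'.1 u := by
      simp only [midConf]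
      rw [if_neg]
      rintro ⟨l, hl, he⟩
      have := hinj he
      have : (l : ZMod r) = (i : ZMod r) := by
        have h2 := congrArg (fun z => z - j) this
        simpa using h2
      have := hcast (by omega) hi this
      omega
    apply Prod.ext
    · rw [S.step_fst hpos]
      show S.head (S.next ((S.midConf f ρ ρ' j i).1 u)) = _
      rw [hmidu, hreg, hhead]
      congr 2
      push_cast
      ring
    · apply Subtype.ext; funext v
      rw [S.step_snd hpos v]
      show (if v = u then S.next ((S.midConf f ρ ρ' j i).1 u) else (S.midConf f ρ ρ' j i).1 v)
          = (S.midConf f ρ ρ' j (i + 1)).1 v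
      by_cases hv : v = u
      · rw [if_pos hv, hmidu, hreg]
        simp only [midConf]
        rw [if_pos ⟨i, by omega, by rw [← hu, hv]⟩, hv]
      · rw [if_neg hv]
        simp only [midConf]
        by_cases hex : ∃ l : ℕ, l < i ∧ f (j + (l : ℕ)) = v
        · obtain ⟨l, hl, he⟩ := hex
          rw [if_pos ⟨l, hl, he⟩, if_pos ⟨l, by omega, he⟩]
        · rw [if_neg hex, if_neg]
          rintro ⟨l, hl, he⟩
          rcases Nat.lt_or_ge l i with h' | h'
          · exact hex ⟨l, h', he⟩
          · have : l = i := by omega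
            subst this
            exact hv (by rw [← he, hu])

lemma midConf_last {r : ℕ} {f : ZMod r → S.V0} {ρ ρ' : S.RConf} (hr : 0 < r)
    (hd : S.PushData r f ρ ρ') (j : ZMod r) : S.midConf f ρ ρ' j r = ρ := by
  haveI : NeZero r := ⟨hr.ne'⟩
  apply Subtype.ext; funext v
  simp only [midConf]
  by_cases hv : v ∈ Set.range f
  · obtain ⟨m, rfl⟩ := hv
    rw [if_pos]
    exact ⟨(m - j).val, ZMod.val_lt _, by rw [ZMod.natCast_val, ZMod.cast_id, add_sub_cancel]⟩
  · rw [if_neg, hd.2.2.2 v hv]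
    rintro ⟨l, hl, he⟩
    exact hv ⟨j + (l : ℕ), he⟩

/-- Pushed cycle, traversed fully: `step^[r]` from a cycle vertex recovers `ρ`. -/
lemma push_walk_full {r : ℕ} {f : ZMod r → S.V0} {ρ ρ' : S.RConf} (hr : 0 < r)
    (hd : S.PushData r f ρ ρ') (j : ZMod r) :
    S.step^[r] ((f j).1, ρ') = ((f j).1, ρ) := by
  haveI : NeZero r := ⟨hr.ne'⟩
  rw [S.push_walk hr hd j r le_rfl, S.midConf_last hr hd j, ZMod.natCast_self, add_zero]

open Classical in
/-- Effect of a cycle push on routing a particle from `w`: either the walk merges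
(with the same outcome), or the two walks stay parallel and the final
configurations still differ by the same cycle push. -/
lemma push_route {r : ℕ} {f : ZMod r → S.V0} {ρ ρ' : S.RConf} (hr : 0 < r)
    (hd : S.PushData r f ρ ρ') (w : V) :
    (S.hitT (w, ρ') = S.hitT (w, ρ) + r ∧ S.rt (w, ρ') = S.rt (w, ρ)) ∨
    ((∀ j, w ≠ (f j).1) ∧ S.hitT (w, ρ') = S.hitT (w, ρ) ∧
      (S.rt (w, ρ)).1 = (S.rt (w, ρ')).1 ∧
      S.PushData r f (S.rt (w, ρ)).2 (S.rt (w, ρ')).2) := by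
  classical
  obtain ⟨hinj, hhead, hreg, hoff⟩ := id hd
  have par : ∀ n, (∀ i, i < n → ∀ j, (S.step^[i] (w,ρ)).1 ≠ (f j).1) →
      (S.step^[n] (w,ρ)).1 = (S.step^[n] (w,ρ')).1 ∧
      (∀ j, (S.step^[n] (w,ρ)).2.1 (f j) = ρ.1 (f j)) ∧
      (∀ j, (S.step^[n] (w,ρ')).2.1 (f j) = ρ'.1 (f j)) ∧
      (∀ v : S.V0, v ∉ Set.range f →
        (S.step^[n] (w,ρ)).2.1 v = (S.step^[n] (w,ρ')).2.1 v) := by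
    intro n
    induction n with
    | zero => exact fun _ => ⟨rfl, fun _ => rfl, fun _ => rfl, fun v hv => (hoff v hv).symm⟩
    | succ n ih =>
      intro hnc
      obtain ⟨hpos, hcyc, hcyc', hoffn⟩ := ih (fun i hi => hnc i (by omega))
      rw [Function.iterate_succ_apply', Function.iterate_succ_apply']
      set A := S.step^[n] (w,ρ) with hA
      set A' := S.step^[n] (w,ρ') with hA'
      by_cases hT : A.1 ∈ S.T
      · have hT' : A'.1 ∈ S.T := hpos ▸ hT
        rw [S.step_of_mem hT, S.step_of_mem hT']
        exact ⟨hpos, hcyc, hcyc', hoffn⟩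
      · have hT' : A'.1 ∉ S.T := hpos ▸ hT
        have hu' : (⟨A'.1, hT'⟩ : S.V0) = ⟨A.1, hT⟩ := Subtype.ext hpos.symm
        have hur : (⟨A.1, hT⟩ : S.V0) ∉ Set.range f := by
          rintro ⟨j, hj⟩
          refine hnc n (by omega) j ?_
          rw [hj]
        have hrot : A.2.1 ⟨A.1, hT⟩ = A'.2.1 ⟨A.1, hT⟩ := hoffn _ hur
        have hrot2 : A.2.1 ⟨A.1, hT⟩ = A'.2.1 ⟨A'.1, hT'⟩ := by
          rw [congrArg A'.2.1 hu']
          exact hrot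
        refine ⟨?_, ?_, ?_, ?_⟩
        · rw [S.step_fst hT, S.step_fst hT', hrot2]
        · intro j
          rw [S.step_snd hT (f j), if_neg (fun he => hur ⟨j, he⟩), hcyc j]
        · intro j
          rw [S.step_snd hT' (f j), if_neg (fun he => hur ⟨j, he.trans hu'⟩), hcyc' j]
        · intro v hv
          rw [S.step_snd hT v, S.step_snd hT' v]
          by_cases hvu : v = (⟨A.1, hT⟩ : S.V0)
          · rw [if_pos hvu, if_pos (hvu.trans hu'.symm), hrot2]
          · rw [if_neg hvu, if_neg (fun he => hvu (he.trans hu'))]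
            exact hoffn v hv
  by_cases hC : ∃ n, ∃ j, (S.step^[n] (w, ρ)).1 = (f j).1
  · -- merge case
    left
    set m := Nat.find hC with hm
    obtain ⟨j, hj⟩ := Nat.find_spec hC
    have hmin : ∀ i, i < m → ∀ j', (S.step^[i] (w,ρ)).1 ≠ (f j').1 := by
      intro i hi j' he
      exact Nat.find_min hC hi ⟨j', he⟩
    obtain ⟨hpos, hcyc, hcyc', hoffm⟩ := par m hmin
    have hnoT : ∀ i, i ≤ m → (S.step^[i] (w,ρ)).1 ∉ S.T := by
      intro i hi hT
      apply (f j).2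
      rw [← hj, S.frozen hT m hi]
      exact hT
    have hdm : S.PushData r f (S.step^[m] (w,ρ)).2 (S.step^[m] (w,ρ')).2 := by
      refine ⟨hinj, ?_, ?_, ?_⟩
      · intro j'; rw [hcyc j']; exact hhead j'
      · intro j'; rw [hcyc' j', hcyc j']; exact hreg j'
      · intro v hv; rw [hoffm v hv]
    have hA'' : S.step^[m] (w,ρ') = ((f j).1, (S.step^[m] (w,ρ')).2) := by
      apply Prod.ext
      · rw [← hpos]; exact hj
      · rfl
    have hmerge : S.step^[m + r] (w, ρ') = S.step^[m] (w, ρ) := by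
      have h1 : S.step^[m + r] (w,ρ') = S.step^[r] (S.step^[m] (w,ρ')) := by
        rw [Nat.add_comm, Function.iterate_add_apply]
      rw [h1, hA'', S.push_walk_full hr hdm j]
      exact Prod.ext hj.symm rfl
    have hnoT' : ∀ i, i < m + r → (S.step^[i] (w,ρ')).1 ∉ S.T := by
      intro i hi
      rcases Nat.lt_or_ge i m with h' | h'
      · rw [← (par i (fun k hk _ => hmin k (by omega) _)).1]
        exact hnoT i (by omega)
      · obtain ⟨d, rfl⟩ := Nat.exists_eq_add_of_le h'
        have h2 : S.step^[m + d] (w,ρ') = S.step^[d] (S.step^[m] (w,ρ')) := by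
          rw [Nat.add_comm, Function.iterate_add_apply]
        rw [h2, hA'', S.push_walk hr hdm j d (by omega)]
        exact (f (j + (d : ℕ))).2
    obtain ⟨he1, he2⟩ := S.hitT_shift (s := (w,ρ)) (a := m) (fun i hi => hnoT i (le_of_lt hi))
    obtain ⟨he1', he2'⟩ := S.hitT_shift (s := (w,ρ')) (a := m + r) hnoT'
    rw [hmerge] at he1' he2'
    refine ⟨by omega, he2'.trans he2.symm⟩
  · -- parallel case
    right
    push_neg at hC
    have hpar := fun n => par n (fun i _ j => hC i j)
    have hposall : ∀ n, (S.step^[n] (w,ρ)).1 = (S.step^[n] (w,ρ')).1 := fun n => (hpar n).1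
    have hhit : S.hitT (w,ρ') = S.hitT (w,ρ) := by
      apply le_antisymm
      · exact S.hitT_le (by rw [← hposall]; exact S.hitT_spec _)
      · exact S.hitT_le (by rw [hposall]; exact S.hitT_spec _)
    refine ⟨fun j => hC 0 j, hhit, ?_, ?_⟩
    · rw [rt, rt, hhit]
      exact hposall _
    · obtain ⟨hpos, hcyc, hcyc', hoffn⟩ := hpar (S.hitT (w,ρ))
      rw [rt, rt, hhit]
      exact ⟨hinj, fun j => by rw [hcyc j]; exact hhead j,
             fun j => by rw [hcyc' j, hcyc j]; exact hreg j,
             fun v hv => (hoffn v hv).symm⟩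

lemma push_addAt {r : ℕ} {f : ZMod r → S.V0} {ρ ρ' : S.RConf} (hr : 0 < r)
    (hd : S.PushData r f ρ ρ') (v : S.V0) :
    S.addAt v ρ' = S.addAt v ρ ∨ S.PushData r f (S.addAt v ρ) (S.addAt v ρ') := by
  rcases S.push_route hr hd v.1 with ⟨-, h2⟩ | ⟨-, -, -, h4⟩
  · left; rw [S.addAt_eq, S.addAt_eq, h2]
  · right; rw [S.addAt_eq, S.addAt_eq]; exact h4

lemma push_addAt_cycle {r : ℕ} {f : ZMod r → S.V0} {ρ ρ' : S.RConf} (hr : 0 < r)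
    (hd : S.PushData r f ρ ρ') {v : S.V0} (hv : ∃ j, v = f j) :
    S.addAt v ρ' = S.addAt v ρ := by
  rcases S.push_route hr hd v.1 with ⟨-, h2⟩ | ⟨h1, -, -, -⟩
  · rw [S.addAt_eq, S.addAt_eq, h2]
  · obtain ⟨j, hj⟩ := hv
    exact absurd (congrArg Subtype.val hj) (h1 j)

lemma push_addAt_iter {r : ℕ} {f : ZMod r → S.V0} {ρ ρ' : S.RConf} (hr : 0 < r)
    (hd : S.PushData r f ρ ρ') (v : S.V0) (k : ℕ) :
    (S.addAt v)^[k] ρ' = (S.addAt v)^[k] ρ ∨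
      S.PushData r f ((S.addAt v)^[k] ρ) ((S.addAt v)^[k] ρ') := by
  induction k with
  | zero => right; exact hd
  | succ k ih =>
    rw [Function.iterate_succ_apply', Function.iterate_succ_apply']
    rcases ih with h | h
    · left; rw [h]
    · exact S.push_addAt hr h v

lemma push_addAt_iter_cycle {r : ℕ} {f : ZMod r → S.V0} {ρ ρ' : S.RConf} (hr : 0 < r)
    (hd : S.PushData r f ρ ρ') {v : S.V0} (hv : ∃ j, v = f j) {k : ℕ} (hk : 0 < k) :
    (S.addAt v)^[k] ρ' = (S.addAt v)^[k] ρ := by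
  obtain ⟨k, rfl⟩ := Nat.exists_eq_add_of_le hk
  rw [Nat.add_comm, Function.iterate_add_apply, Function.iterate_add_apply,
    Function.iterate_one, S.push_addAt_cycle hr hd hv]

lemma push_foldr {r : ℕ} {f : ZMod r → S.V0} {ρ ρ' : S.RConf} (hr : 0 < r)
    (hd : S.PushData r f ρ ρ') (σ : S.PConf) : ∀ L : List S.V0,
    L.foldr (fun v t => (S.addAt v)^[σ v] t) ρ' = L.foldr (fun v t => (S.addAt v)^[σ v] t) ρ ∨
      S.PushData r f (L.foldr (fun v t => (S.addAt v)^[σ v] t) ρ)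
        (L.foldr (fun v t => (S.addAt v)^[σ v] t) ρ') := by
  intro L
  induction L with
  | nil => right; exact hd
  | cons v L ih =>
    rw [List.foldr_cons, List.foldr_cons]
    rcases ih with h | h
    · left; rw [h]
    · exact S.push_addAt_iter hr h v (σ v)

lemma push_foldr_cycle {r : ℕ} {f : ZMod r → S.V0} {ρ ρ' : S.RConf} (hr : 0 < r)
    (hd : S.PushData r f ρ ρ') (σ : S.PConf) : ∀ L : List S.V0,
    (∃ v ∈ L, (∃ j, v = f j) ∧ 0 < σ v) →
    L.foldr (fun v t => (S.addAt v)^[σ v] t) ρ' = L.foldr (fun v t => (S.addAt v)^[σ v] t) ρ := by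
  intro L
  induction L with
  | nil => rintro ⟨v, hv, -⟩; exact absurd hv List.not_mem_nil
  | cons w L ih =>
    rintro ⟨v, hv, hvc, hvσ⟩
    rw [List.foldr_cons, List.foldr_cons]
    rcases List.mem_cons.mp hv with rfl | hvL
    · rcases S.push_foldr hr hd σ L with h | h
      · rw [h]
      · exact S.push_addAt_iter_cycle hr h hvc hvσ
    · rw [ih ⟨v, hvL, hvc, hvσ⟩]

lemma cyclePush_act {ρ ρ' : S.RConf} (h : S.IsCyclePush ρ ρ') (σ : S.PConf) :
    S.act σ ρ' = S.act σ ρ ∨ S.IsCyclePush (S.act σ ρ) (S.act σ ρ') := by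
  obtain ⟨r, hr, f, hd⟩ := h
  rcases S.push_foldr hr hd σ (Finset.univ : Finset S.V0).toList with h | h
  · left; exact h
  · right; exact ⟨r, hr, f, h⟩

lemma cyclePush_act_pos {ρ ρ' : S.RConf} (h : S.IsCyclePush ρ ρ') {σ : S.PConf}
    (hσ : ∀ v, 0 < σ v) : S.act σ ρ' = S.act σ ρ := by
  obtain ⟨r, hr, f, hd⟩ := h
  exact S.push_foldr_cycle hr hd σ _
    ⟨f 0, Finset.mem_toList.mpr (Finset.mem_univ _), ⟨0, rfl⟩, hσ _⟩

lemma cpStar_act_one {ρ ρh : S.RConf} (h : Relation.ReflTransGen S.IsCyclePush ρ ρh) :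
    S.act 1 ρ = S.act 1 ρh := by
  induction h with
  | refl => rfl
  | tail _ he ih => exact ih.trans (S.cyclePush_act_pos he (fun _ => Nat.one_pos)).symm

lemma cpStar_act {ρ ρh : S.RConf} (h : Relation.ReflTransGen S.IsCyclePush ρ ρh)
    (σ : S.PConf) :
    Relation.ReflTransGen S.IsCyclePush (S.act σ ρ) (S.act σ ρh) := by
  induction h with
  | refl => exact Relation.ReflTransGen.refl
  | tail _ he ih =>
    rcases S.cyclePush_act he σ with h' | h'
    · rw [h']; exact ih
    · exact ih.tail h'

lemma cnt_congr {s : V × S.RConf} {x : V} {a b : ℕ} (hab : a ≤ b)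
    (h : ∀ i, a ≤ i → i < b → (S.step^[i] s).1 ≠ x) : S.cnt s x b = S.cnt s x a := by
  induction b with
  | zero =>
    have : a = 0 := by omega
    rw [this]
  | succ b ih =>
    by_cases hab' : a ≤ b
    · rw [cnt_succ, if_neg (h b hab' (by omega)), Nat.add_zero]
      exact ih hab' (fun i h1 h2 => h i h1 (by omega))
    · have : a = b + 1 := by omega
      rw [this]

lemma conf_stable {s : V × S.RConf} (u : S.V0) {a b : ℕ} (hab : a ≤ b)
    (h : ∀ i, a ≤ i → i < b → (S.step^[i] s).1 ≠ u.1) :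
    (S.step^[b] s).2.1 u = (S.step^[a] s).2.1 u := by
  rw [S.rotor_evol s u b, S.rotor_evol s u a, S.cnt_congr hab h]

lemma transGen_src {ρ : S.RConf} {c b : V}
    (h : Relation.TransGen (S.rotorRel ρ) c b) : c ∉ S.T := by
  induction h with
  | single e => obtain ⟨h1, -⟩ := e; exact h1
  | tail _ _ ih => exact ih

open Classical in
/-- Routing a particle preserves acyclicity of the rotor configuration. -/
lemma rt_acyclic {s : V × S.RConf} (hac : S.IsAcyclicConf s.2) :
    S.IsAcyclicConf (S.rt s).2 := by
  classical
  set N := S.hitT s with hN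
  set F : S.V0 → Finset ℕ :=
    fun u => (Finset.range N).filter (fun i => (S.step^[i] s).1 = u.1) with hF
  have memF : ∀ (u : S.V0) (i : ℕ), i ∈ F u ↔ i < N ∧ (S.step^[i] s).1 = u.1 := by
    intro u i
    rw [hF]
    simp [Finset.mem_filter, Finset.mem_range]
  -- rotor of an exited vertex: the last-exit arc
  have key : ∀ (u : S.V0) (h : (F u).Nonempty),
      S.head ((S.rt s).2.1 u) = (S.step^[(F u).max' h + 1] s).1 := by
    intro u h
    set l := (F u).max' h with hl
    have hlmem := (memF u l).mp ((F u).max'_mem h)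
    have hlT : (S.step^[l] s).1 ∉ S.T := S.hitT_min hlmem.1
    have hnolater : ∀ i, l + 1 ≤ i → i < N → (S.step^[i] s).1 ≠ u.1 := by
      intro i hi1 hi2 he
      have := (F u).le_max' i ((memF u i).mpr ⟨hi2, he⟩)
      omega
    have h1 : (S.rt s).2.1 u = (S.step^[l + 1] s).2.1 u := by
      show (S.step^[N] s).2.1 u = _
      exact S.conf_stable u (by omega) hnolater
    have h2 : (S.step^[l + 1] s).2.1 u = S.next ((S.step^[l] s).2.1 u) := by
      rw [Function.iterate_succ_apply', S.step_snd hlT u,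
        if_pos (Subtype.ext hlmem.2.symm),
        show (⟨(S.step^[l] s).1, hlT⟩ : S.V0) = u from Subtype.ext hlmem.2]
    have h3 : (S.step^[l + 1] s).1 = S.head (S.next ((S.step^[l] s).2.1 u)) := by
      rw [Function.iterate_succ_apply', S.step_fst hlT,
        show (⟨(S.step^[l] s).1, hlT⟩ : S.V0) = u from Subtype.ext hlmem.2]
    rw [h1, h2, h3]
  -- rotor of an unexited vertex is unchanged
  have unex : ∀ u : S.V0, ¬(F u).Nonempty → (S.rt s).2.1 u = s.2.1 u := by
    intro u h
    show (S.step^[N] s).2.1 u = s.2.1 u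
    refine S.conf_stable u (Nat.zero_le N) (fun i _ hi2 he => h ⟨i, (memF u i).mpr ⟨hi2, he⟩⟩)
  -- single edge step for exited vertices
  have edgeC : ∀ a b (ha : a ∉ S.T) (hex : (F ⟨a, ha⟩).Nonempty),
      S.rotorRel (S.rt s).2 a b →
      b ∈ S.T ∨ ∃ (hb : b ∉ S.T) (hexb : (F ⟨b, hb⟩).Nonempty),
        (F ⟨a, ha⟩).max' hex < (F ⟨b, hb⟩).max' hexb := by
    intro a b ha hex e
    obtain ⟨ha', he⟩ := e
    set l := (F ⟨a, ha⟩).max' hex with hl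
    have hb' : (S.step^[l + 1] s).1 = b := by rw [← key ⟨a, ha⟩ hex]; exact he
    have hlN : l < N := ((memF _ l).mp ((F ⟨a, ha⟩).max'_mem hex)).1
    rcases Nat.lt_or_ge (l + 1) N with hlt | hge
    · right
      have hbT : b ∉ S.T := by rw [← hb']; exact S.hitT_min hlt
      have hmem : l + 1 ∈ F ⟨b, hbT⟩ := (memF _ _).mpr ⟨hlt, hb'⟩
      refine ⟨hbT, ⟨l + 1, hmem⟩, ?_⟩
      have := (F ⟨b, hbT⟩).le_max' (l + 1) hmem
      omega
    · left
      have hNl : l + 1 = N := by omega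
      rw [← hb', hNl]
      exact S.hitT_spec s
  -- transitive version
  have claimC : ∀ a b, Relation.TransGen (S.rotorRel (S.rt s).2) a b →
      ∀ (ha : a ∉ S.T) (hex : (F ⟨a, ha⟩).Nonempty),
      b ∈ S.T ∨ ∃ (hb : b ∉ S.T) (hexb : (F ⟨b, hb⟩).Nonempty),
        (F ⟨a, ha⟩).max' hex < (F ⟨b, hb⟩).max' hexb := by
    intro a b h
    induction h with
    | single e => exact fun ha hex => edgeC _ _ ha hex e
    | tail _ e ih =>
      intro ha hex
      obtain ⟨hcT, -⟩ := id e
      rcases ih ha hex with h' | ⟨hb', hexb', hlt'⟩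
      · exact absurd h' hcT
      · rcases edgeC _ _ hb' hexb' e with h'' | ⟨hb'', hexb'', hlt''⟩
        · exact Or.inl h''
        · exact Or.inr ⟨hb'', hexb'', lt_trans hlt' hlt''⟩
  -- escape from the unexited region
  have claimD : ∀ a b, Relation.TransGen (S.rotorRel (S.rt s).2) a b →
      ∀ (ha : a ∉ S.T), ¬(F ⟨a, ha⟩).Nonempty →
      Relation.TransGen (S.rotorRel s.2) a b ∨
        ∃ u : S.V0, (F u).Nonempty ∧
          Relation.ReflTransGen (S.rotorRel (S.rt s).2) a u.1 ∧
          Relation.TransGen (S.rotorRel (S.rt s).2) u.1 b := by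
    intro a b h
    induction h using Relation.TransGen.head_induction_on with
    | single e =>
      rename_i a'
      intro ha hnex
      left
      obtain ⟨ha', he⟩ := id e
      exact Relation.TransGen.single
        ⟨ha, by rw [← he]; exact (congrArg S.head (unex ⟨a', ha⟩ hnex)).symm⟩
    | head e ht iht =>
      intro ha hnex
      rename_i a' c
      obtain ⟨ha', hac⟩ := id e
      have hcT : c ∉ S.T := S.transGen_src ht
      by_cases hcx : (F ⟨c, hcT⟩).Nonempty
      · exact Or.inr ⟨⟨c, hcT⟩, hcx, Relation.ReflTransGen.single e, ht⟩
      · rcases iht hcT hcx with hl | ⟨u, hu1, hu2, hu3⟩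
        · left
          refine Relation.TransGen.head ⟨ha, ?_⟩ hl
          rw [← hac]
          exact (congrArg S.head (unex ⟨a', ha⟩ hnex)).symm
        · exact Or.inr ⟨u, hu1, Relation.ReflTransGen.head e hu2, hu3⟩
  -- conclude
  intro v hcyc
  have hvT : v ∉ S.T := S.transGen_src hcyc
  by_cases hvx : (F ⟨v, hvT⟩).Nonempty
  · rcases claimC v v hcyc hvT hvx with h | ⟨hb, hexb, hlt⟩
    · exact hvT h
    · exact absurd hlt (lt_irrefl _)
  · rcases claimD v v hcyc hvT hvx with h | ⟨u, hu1, hu2, hu3⟩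
    · exact hac v h
    · have hcu : Relation.TransGen (S.rotorRel (S.rt s).2) u.1 u.1 :=
        Relation.TransGen.trans_left hu3 hu2
      rcases claimC u.1 u.1 hcu u.2 hu1 with h | ⟨hb, hexb, hlt⟩
      · exact u.2 h
      · exact absurd hlt (lt_irrefl _)

/-- Hitting times are bounded by the size of the state space. -/
lemma hitT_le_card (s : V × S.RConf) : S.hitT s ≤ Fintype.card (V × S.RConf) := by
  by_contra hcon
  push_neg at hcon
  set C := Fintype.card (V × S.RConf) with hC
  have : ¬ Function.Injective (fun i : Fin (C + 1) => S.step^[i.1] s) := by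
    intro hinj
    have := Fintype.card_le_of_injective _ hinj
    rw [Fintype.card_fin] at this
    omega
  rw [Function.not_injective_iff] at this
  obtain ⟨i', j', heq', hne'⟩ := this
  obtain ⟨i, j, hij, hjC, heq⟩ : ∃ i j : ℕ, i < j ∧ j ≤ C ∧ S.step^[i] s = S.step^[j] s := by
    rcases lt_or_gt_of_ne (fun h => hne' (Fin.ext h)) with h | h
    · exact ⟨i'.1, j'.1, h, by omega, heq'⟩
    · exact ⟨j'.1, i'.1, h, by omega, heq'.symm⟩
  set p := j - i with hp
  have hp0 : 0 < p := by omega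
  have hfix : S.step^[p] (S.step^[i] s) = S.step^[i] s := by
    rw [← Function.iterate_add_apply]
    have : p + i = j := by omega
    rw [this, ← heq]
  have hNi : i ≤ S.hitT s := by omega
  have h1 : S.step^[S.hitT s] s = S.step^[i + (S.hitT s - i) % p] s := by
    calc S.step^[S.hitT s] s = S.step^[S.hitT s - i] (S.step^[i] s) := by
          rw [← Function.iterate_add_apply]
          congr 1
          omega
      _ = S.step^[(S.hitT s - i) % p] (S.step^[i] s) := iterate_mod _ _ p hfix _
      _ = S.step^[i + (S.hitT s - i) % p] s := by
          rw [Nat.add_comm, Function.iterate_add_apply]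
  have hlt : i + (S.hitT s - i) % p < S.hitT s := by
    have := Nat.mod_lt (S.hitT s - i) hp0
    omega
  exact S.hitT_min hlt (h1 ▸ S.hitT_spec s)

/-- The total hitting-time potential of a configuration. -/
noncomputable def Phi (ρ : S.RConf) : ℕ := ∑ v : S.V0, S.hitT (v.1, ρ)

lemma Phi_le (ρ : S.RConf) :
    S.Phi ρ ≤ Fintype.card S.V0 * Fintype.card (V × S.RConf) := by
  calc S.Phi ρ ≤ ∑ _v : S.V0, Fintype.card (V × S.RConf) :=
        Finset.sum_le_sum (fun v _ => S.hitT_le_card _)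
    _ = Fintype.card S.V0 * Fintype.card (V × S.RConf) := by
        rw [Finset.sum_const, smul_eq_mul, Finset.card_univ]

/-- A cycle push strictly increases the potential. -/
lemma push_Phi {ρ ρ' : S.RConf} (h : S.IsCyclePush ρ ρ') : S.Phi ρ < S.Phi ρ' := by
  obtain ⟨r, hr, f, hd⟩ := h
  apply Finset.sum_lt_sum (f := fun v : S.V0 => S.hitT (v.1, ρ))
  · intro v _
    rcases S.push_route hr hd v.1 with ⟨h1, -⟩ | ⟨-, h1, -⟩ <;> omega
  · refine ⟨f 0, Finset.mem_univ _, ?_⟩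
    rcases S.push_route hr hd (f 0).1 with ⟨h1, -⟩ | ⟨h1, -⟩
    · omega
    · exact absurd rfl (h1 0)

open Classical in
/-- A configuration with a rotor cycle admits a cycle push. -/
lemma exists_push {ρ : S.RConf} (h : ¬ S.IsAcyclicConf ρ) :
    ∃ ρ', S.IsCyclePush ρ ρ' := by
  classical
  rw [IsAcyclicConf] at h
  push_neg at h
  obtain ⟨v, hv⟩ := h
  set G : V → V := fun x => if h : x ∈ S.T then x else S.head (ρ.1 ⟨x, h⟩) with hG
  have hGapp : ∀ (x : V) (hx : x ∉ S.T), G x = S.head (ρ.1 ⟨x, hx⟩) := fun x hx => dif_neg hx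
  have hiter : ∀ {a b : V}, Relation.TransGen (S.rotorRel ρ) a b →
      ∃ n, 0 < n ∧ G^[n] a = b ∧ ∀ i, i < n → G^[i] a ∉ S.T := by
    intro a b hab
    induction hab with
    | single e =>
      obtain ⟨ha, he⟩ := e
      refine ⟨1, Nat.one_pos, ?_, ?_⟩
      · rw [Function.iterate_one, hGapp a ha]
        exact he
      · intro i hi
        have h0 : i = 0 := by omega
        rw [h0]
        exact ha
    | tail _ e ih =>
      obtain ⟨n, hn0, hnb, hnT⟩ := ih
      obtain ⟨hb', he⟩ := e
      refine ⟨n + 1, by omega, ?_, ?_⟩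
      · rw [Function.iterate_succ_apply', hnb, hGapp _ hb']
        exact he
      · intro i hi
        rcases Nat.lt_or_ge i n with h' | h'
        · exact hnT i h'
        · have hin : i = n := by omega
          rw [hin, hnb]
          exact hb'
  obtain ⟨n, hn0, hnv, hnT⟩ := hiter hv
  have hallT : ∀ k, G^[k] v ∉ S.T := by
    intro k
    rw [iterate_mod G v n hnv k]
    exact hnT _ (Nat.mod_lt _ hn0)
  have hex : ∃ m, 0 < m ∧ G^[m] v = v := ⟨n, hn0, hnv⟩
  set m := Nat.find hex with hm
  obtain ⟨hm0, hmv⟩ := Nat.find_spec hex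
  rw [← hm] at hm0 hmv
  have hdist : ∀ i j : ℕ, i < j → j < m → G^[i] v ≠ G^[j] v := by
    intro i j hij hjm he
    have h1 : G^[(m - j) + i] v = v := by
      rw [Function.iterate_add_apply, he, ← Function.iterate_add_apply]
      have hmj : m - j + j = m := by omega
      rw [hmj, hmv]
    exact Nat.find_min hex (m := (m - j) + i) (by omega) ⟨by omega, h1⟩
  haveI : NeZero m := ⟨hm0.ne'⟩
  have hvalinj : ∀ a b : ZMod m, a.val = b.val → a = b := by
    intro a b hab
    rw [← show ((a.val : ℕ) : ZMod m) = a by rw [ZMod.natCast_val, ZMod.cast_id],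
      ← show ((b.val : ℕ) : ZMod m) = b by rw [ZMod.natCast_val, ZMod.cast_id], hab]
  set f : ZMod m → S.V0 := fun j => ⟨G^[j.val] v, hallT _⟩ with hf
  have hfinj : Function.Injective f := by
    intro j j' he
    have he' : G^[j.val] v = G^[j'.val] v := congrArg Subtype.val he
    by_contra hne
    have hvne : j.val ≠ j'.val := fun h' => hne (hvalinj _ _ h')
    rcases Nat.lt_or_ge j.val j'.val with h' | h'
    · exact hdist _ _ h' (ZMod.val_lt j') he'
    · exact hdist _ _ (by omega) (ZMod.val_lt j) he'.symm
  have hhead : ∀ j : ZMod m, S.head (ρ.1 (f j)) = (f (j + 1)).1 := by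
    intro j
    show S.head (ρ.1 ⟨G^[j.val] v, _⟩) = G^[(j + 1).val] v
    have h1 : S.head (ρ.1 ⟨G^[j.val] v, hallT _⟩) = G^[j.val + 1] v := by
      rw [Function.iterate_succ_apply']
      exact (hGapp _ (hallT j.val)).symm
    have h2 : (j + 1).val = (j.val + 1) % m := by
      rw [show j + 1 = ((j.val + 1 : ℕ) : ZMod m) by
        rw [Nat.cast_add, Nat.cast_one, ZMod.natCast_val, ZMod.cast_id], ZMod.val_natCast]
    rw [h2, ← iterate_mod G v m hmv (j.val + 1)]
    exact h1
  refine ⟨⟨fun u => if u ∈ Set.range f then S.nextE.symm (ρ.1 u) else ρ.1 u, ?_⟩,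
    m, hm0, f, hfinj, hhead, ?_, ?_⟩
  · intro u
    dsimp only
    split
    · rw [S.src_nextE_symm]; exact ρ.2 u
    · exact ρ.2 u
  · intro j
    show S.next (if f j ∈ Set.range f then S.nextE.symm (ρ.1 (f j)) else ρ.1 (f j)) = _
    rw [if_pos ⟨j, rfl⟩, S.next_nextE_symm]
  · intro u hu
    show (if u ∈ Set.range f then S.nextE.symm (ρ.1 u) else ρ.1 u) = ρ.1 u
    rw [if_neg hu]

/-- **Normalization**: every configuration reduces to an acyclic one by cycle
pushes. -/
lemma exists_acyclic_reduct (ρ : S.RConf) :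
    ∃ ρh, Relation.ReflTransGen S.IsCyclePush ρ ρh ∧ S.IsAcyclicConf ρh := by
  set B := Fintype.card S.V0 * Fintype.card (V × S.RConf) with hB
  have main : ∀ k (ρ : S.RConf), B < S.Phi ρ + k →
      ∃ ρh, Relation.ReflTransGen S.IsCyclePush ρ ρh ∧ S.IsAcyclicConf ρh := by
    intro k
    induction k with
    | zero =>
      intro ρ hk
      have := S.Phi_le ρ
      omega
    | succ k ih =>
      intro ρ hk
      by_cases hac : S.IsAcyclicConf ρ
      · exact ⟨ρ, Relation.ReflTransGen.refl, hac⟩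
      · obtain ⟨ρ', hp⟩ := S.exists_push hac
        have := S.push_Phi hp
        obtain ⟨ρh, h1, h2⟩ := ih ρ' (by omega)
        exact ⟨ρh, Relation.ReflTransGen.head hp h1, h2⟩
  exact main (B + 1) ρ (by omega)

lemma filter_range_card_succ (p : ℕ → Prop) [DecidablePred p] (n : ℕ) :
    ((Finset.range (n + 1)).filter p).card
      = ((Finset.range n).filter p).card + if p n then 1 else 0 := by
  rw [Finset.range_add_one, Finset.filter_insert]
  split
  · rw [Finset.card_insert_of_notMem (by simp)]
  · simp

open Classical in
/-- The master counting identity for a terminated rotor walk: the number of exits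
from `u` equals the number of entries plus the initial particle. -/
lemma walk_count (w : V) (ρ : S.RConf) (u : S.V0) :
    S.cnt (w, ρ) u.1 (S.hitT (w, ρ)) =
      (if w = u.1 then 1 else 0) +
      ∑ v : S.V0, ((Finset.Icc 1 (S.cnt (w, ρ) v.1 (S.hitT (w, ρ)))).filter
          (fun j => S.head (S.next^[j] (ρ.1 v)) = u.1)).card := by
  classical
  set s : V × S.RConf := (w, ρ) with hs
  set N := S.hitT s with hN
  have flow : ∀ n, S.cnt s u.1 n + (if (S.step^[n] s).1 = u.1 then 1 else 0)
      = ((Finset.range n).filter (fun i => (S.step^[i + 1] s).1 = u.1)).card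
        + (if w = u.1 then 1 else 0) := by
    intro n
    induction n with
    | zero => simp [cnt_zero, hs]
    | succ n ih =>
      simp only [cnt_succ, filter_range_card_succ]
      omega
  have flowN : S.cnt s u.1 N
      = ((Finset.range N).filter (fun i => (S.step^[i + 1] s).1 = u.1)).card
        + (if w = u.1 then 1 else 0) := by
    have h1 := flow N
    rw [if_neg (fun (he : (S.step^[N] s).1 = u.1) => u.2 (he ▸ S.hitT_spec s))] at h1
    omega
  have fib : ((Finset.range N).filter (fun i => (S.step^[i + 1] s).1 = u.1)).card
      = ∑ x : V, ((Finset.range N).filter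
          (fun i => (S.step^[i + 1] s).1 = u.1 ∧ (S.step^[i] s).1 = x)).card := by
    rw [Finset.card_eq_sum_card_fiberwise
      (f := fun i => (S.step^[i] s).1) (t := Finset.univ) (fun x _ => Finset.mem_univ _)]
    exact Finset.sum_congr rfl (fun x _ => by rw [Finset.filter_filter])
  have hTzero : ∀ x ∈ Finset.univ.filter (fun x : V => x ∈ S.T),
      ((Finset.range N).filter
        (fun i => (S.step^[i + 1] s).1 = u.1 ∧ (S.step^[i] s).1 = x)).card = 0 := by
    intro x hx
    rw [Finset.card_eq_zero, Finset.filter_eq_empty_iff]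
    rintro i hi ⟨-, h2⟩
    exact S.hitT_min (Finset.mem_range.mp hi) (h2 ▸ (Finset.mem_filter.mp hx).2)
  have subty : ∑ x : V, ((Finset.range N).filter
        (fun i => (S.step^[i + 1] s).1 = u.1 ∧ (S.step^[i] s).1 = x)).card
      = ∑ v : S.V0, ((Finset.range N).filter
        (fun i => (S.step^[i + 1] s).1 = u.1 ∧ (S.step^[i] s).1 = v.1)).card := by
    rw [← Finset.sum_filter_add_sum_filter_not Finset.univ (fun x : V => x ∈ S.T),
      Finset.sum_eq_zero hTzero, zero_add]
    exact Finset.sum_subtype _ (by simp) _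
  have persrc : ∀ v : S.V0,
      ((Finset.range N).filter
        (fun i => (S.step^[i + 1] s).1 = u.1 ∧ (S.step^[i] s).1 = v.1)).card
      = ((Finset.Icc 1 (S.cnt s v.1 N)).filter
        (fun j => S.head (S.next^[j] (ρ.1 v)) = u.1)).card := by
    intro v
    apply Finset.card_bij (fun i _ => S.cnt s v.1 i + 1)
    · intro i hi
      obtain ⟨hir, h1, h2⟩ : i ∈ Finset.range N ∧ (S.step^[i + 1] s).1 = u.1
          ∧ (S.step^[i] s).1 = v.1 := by
        have := Finset.mem_filter.mp hi
        exact ⟨this.1, this.2.1, this.2.2⟩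
      have hiN : i < N := Finset.mem_range.mp hir
      refine Finset.mem_filter.mpr ⟨Finset.mem_Icc.mpr ⟨by omega, ?_⟩, ?_⟩
      · have e1 : S.cnt s v.1 (i + 1) = S.cnt s v.1 i + 1 := by
          rw [cnt_succ, if_pos h2]
        have e2 := S.cnt_mono s v.1 (show i + 1 ≤ N by omega)
        omega
      · have hp := S.pos_succ s i (S.hitT_min hiN) v h2
        rw [← hp]
        exact h1
    · intro i hi i' hi' he
      obtain ⟨hir, -, h2⟩ := Finset.mem_filter.mp hi
      obtain ⟨hir', -, h2'⟩ := Finset.mem_filter.mp hi'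
      by_contra hne
      have key : ∀ a b : ℕ, a < b → (S.step^[a] s).1 = v.1 →
          S.cnt s v.1 a < S.cnt s v.1 b := by
        intro a b hab ha
        have e1 : S.cnt s v.1 (a + 1) = S.cnt s v.1 a + 1 := by
          rw [cnt_succ, if_pos ha]
        have e2 := S.cnt_mono s v.1 (show a + 1 ≤ b by omega)
        omega
      rcases Nat.lt_or_ge i i' with h' | h'
      · have := key i i' h' h2; omega
      · have := key i' i (by omega) h2'; omega
    · intro j hj
      obtain ⟨hj1, hj2⟩ := Finset.mem_filter.mp hj
      obtain ⟨hj3, hj4⟩ := Finset.mem_Icc.mp hj1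
      obtain ⟨τ, ht1, ht2, ht3, ht4⟩ := S.cnt_ivt s v.1 N 0 (j - 1) (by omega)
        (by rw [cnt_zero]; omega) (by omega)
      refine ⟨τ, Finset.mem_filter.mpr ⟨Finset.mem_range.mpr ht2, ?_, ht3⟩, by omega⟩
      have hp := S.pos_succ s τ (S.hitT_min ht2) v ht3
      rw [hp, ht4]
      have he : j - 1 + 1 = j := by omega
      rw [he]
      exact hj2
  rw [flowN, fib, subty, Nat.add_comm]
  congr 1
  exact Finset.sum_congr rfl (fun v _ => persrc v)

lemma sum_head_window (e : E) (d : ℕ) :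
    ∑ x : V, ((Finset.Icc 1 d).filter (fun j => S.head (S.next^[j] e) = x)).card = d := by
  classical
  rw [← Finset.card_eq_sum_card_fiberwise
    (f := fun j => S.head (S.next^[j] e)) (t := Finset.univ) (fun x _ => Finset.mem_univ _)]
  rw [Nat.card_Icc]
  omega

lemma window_split {e1 e2 : E} {a b : ℕ} (hle : b ≤ a)
    (hrot : S.next^[a] e1 = S.next^[b] e2) (x : V) :
    ((Finset.Icc 1 a).filter (fun j => S.head (S.next^[j] e1) = x)).card
      = ((Finset.Icc 1 (a - b)).filter (fun j => S.head (S.next^[j] e1) = x)).card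
        + ((Finset.Icc 1 b).filter (fun j => S.head (S.next^[j] e2) = x)).card := by
  classical
  have he2 : e2 = S.next^[a - b] e1 := by
    apply S.next_iterate_injective b
    rw [← Function.iterate_add_apply, show b + (a - b) = a by omega]
    exact hrot.symm
  have hsecond : ((Finset.Icc 1 b).filter (fun j => S.head (S.next^[j] e2) = x)).card
      = ((Finset.Icc (a - b + 1) a).filter (fun j => S.head (S.next^[j] e1) = x)).card := by
    apply Finset.card_bij (fun j _ => j + (a - b))
    · intro j hj
      obtain ⟨h1, h2⟩ := Finset.mem_filter.mp hj
      obtain ⟨h3, h4⟩ := Finset.mem_Icc.mp h1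
      refine Finset.mem_filter.mpr ⟨Finset.mem_Icc.mpr ⟨by omega, by omega⟩, ?_⟩
      rw [Function.iterate_add_apply, ← he2]
      exact h2
    · intro j hj j' hj' he
      omega
    · intro j hj
      obtain ⟨h1, h2⟩ := Finset.mem_filter.mp hj
      obtain ⟨h3, h4⟩ := Finset.mem_Icc.mp h1
      refine ⟨j - (a - b), Finset.mem_filter.mpr ⟨Finset.mem_Icc.mpr ⟨by omega, by omega⟩, ?_⟩,
        by omega⟩
      rw [he2, ← Function.iterate_add_apply, show j - (a - b) + (a - b) = j by omega]
      exact h2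
  have hunion : Finset.Icc 1 a = Finset.Icc 1 (a - b) ∪ Finset.Icc (a - b + 1) a := by
    ext j
    simp only [Finset.mem_Icc, Finset.mem_union]
    omega
  rw [hsecond, hunion, Finset.filter_union, Finset.card_union_of_disjoint]
  exact Finset.disjoint_filter_filter (Finset.disjoint_left.mpr (fun j hj hj' => by
    simp only [Finset.mem_Icc] at hj hj'
    omega))

lemma exists_cycle_of_closed {α : Type*} [Finite α] (R : α → α → Prop)
    (A : Finset α) (hA : A.Nonempty) (hcl : ∀ u ∈ A, ∃ u' ∈ A, R u u') :
    ∃ x, Relation.TransGen R x x := by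
  classical
  obtain ⟨u0, hu0⟩ := hA
  choose! g hg1 hg2 using hcl
  have hiter : ∀ k, g^[k] u0 ∈ A := by
    intro k
    induction k with
    | zero => exact hu0
    | succ k ih => rw [Function.iterate_succ_apply']; exact hg1 _ ih
  have hchain : ∀ i d, Relation.TransGen R (g^[i] u0) (g^[i + d + 1] u0) := by
    intro i d
    induction d with
    | zero =>
      have h := hg2 _ (hiter i)
      rw [← Function.iterate_succ_apply' g i u0] at h
      exact Relation.TransGen.single h
    | succ d ih =>
      refine Relation.TransGen.tail ih ?_
      have h := hg2 _ (hiter (i + d + 1))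
      rw [← Function.iterate_succ_apply' g (i + d + 1) u0] at h
      exact h
  obtain ⟨i', j', hne, he⟩ := Finite.exists_ne_map_eq_of_infinite (fun k : ℕ => g^[k] u0)
  obtain ⟨i, j, hij, he⟩ : ∃ i j, i < j ∧ g^[i] u0 = g^[j] u0 := by
    rcases lt_or_gt_of_ne hne with h | h
    · exact ⟨i', j', h, he⟩
    · exact ⟨j', i', h, he.symm⟩
  have h := hchain i (j - i - 1)
  rw [show i + (j - i - 1) + 1 = j by omega] at h
  exact ⟨g^[j] u0, he ▸ h⟩

open Classical in
/-- Key injectivity estimate: if two walks from `w` end with the same rotor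
configuration and the second initial configuration is acyclic, then the first walk
exits every vertex at most as often as the second. -/
lemma rt_le_aux {w : V} {ρ1 ρ2 : S.RConf} (hac2 : S.IsAcyclicConf ρ2)
    (heq : (S.rt (w, ρ1)).2 = (S.rt (w, ρ2)).2) (u : S.V0) :
    S.cnt (w, ρ1) u.1 (S.hitT (w, ρ1)) ≤ S.cnt (w, ρ2) u.1 (S.hitT (w, ρ2)) := by
  classical
  by_contra hcon
  push_neg at hcon
  set k1 : S.V0 → ℕ := fun v => S.cnt (w, ρ1) v.1 (S.hitT (w, ρ1)) with hk1
  set k2 : S.V0 → ℕ := fun v => S.cnt (w, ρ2) v.1 (S.hitT (w, ρ2)) with hk2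
  have hrot : ∀ v, S.next^[k1 v] (ρ1.1 v) = S.next^[k2 v] (ρ2.1 v) := by
    intro v
    have e1 : (S.rt (w, ρ1)).2.1 v = S.next^[k1 v] (ρ1.1 v) := S.rotor_evol (w, ρ1) v _
    have e2 : (S.rt (w, ρ2)).2.1 v = S.next^[k2 v] (ρ2.1 v) := S.rotor_evol (w, ρ2) v _
    rw [← e1, ← e2, heq]
  have hshift : ∀ v : S.V0, k2 v ≤ k1 v → ρ2.1 v = S.next^[k1 v - k2 v] (ρ1.1 v) := by
    intro v hle
    apply S.next_iterate_injective (k2 v)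
    rw [← Function.iterate_add_apply, show k2 v + (k1 v - k2 v) = k1 v by omega]
    exact (hrot v).symm
  set AW1 : S.V0 → V → ℕ := fun v x =>
    ((Finset.Icc 1 (k1 v)).filter (fun j => S.head (S.next^[j] (ρ1.1 v)) = x)).card with hAW1
  set AW2 : S.V0 → V → ℕ := fun v x =>
    ((Finset.Icc 1 (k2 v)).filter (fun j => S.head (S.next^[j] (ρ2.1 v)) = x)).card with hAW2
  set D : S.V0 → ℕ := fun v => k1 v - k2 v with hD
  set Dl : S.V0 → V → ℕ := fun v x =>
    ((Finset.Icc 1 (D v)).filter (fun j => S.head (S.next^[j] (ρ1.1 v)) = x)).card with hDl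
  have hcount1 : ∀ v : S.V0, k1 v = (if w = v.1 then 1 else 0) + ∑ v' : S.V0, AW1 v' v.1 := by
    intro v
    simp only [hk1, hAW1]
    exact S.walk_count w ρ1 v
  have hcount2 : ∀ v : S.V0, k2 v = (if w = v.1 then 1 else 0) + ∑ v' : S.V0, AW2 v' v.1 := by
    intro v
    simp only [hk2, hAW2]
    exact S.walk_count w ρ2 v
  have hsplit : ∀ v : S.V0, k2 v ≤ k1 v → ∀ x, AW1 v x = Dl v x + AW2 v x := by
    intro v hle x
    simp only [hAW1, hAW2, hDl, hD]
    exact S.window_split hle (hrot v) x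
  have hsplitle : ∀ v : S.V0, k1 v ≤ k2 v → ∀ x, AW1 v x ≤ AW2 v x := by
    intro v hle x
    simp only [hAW1, hAW2]
    rw [S.window_split hle (hrot v).symm x]
    omega
  have hDlsum : ∀ v : S.V0, ∑ x : V, Dl v x = D v := by
    intro v
    simp only [hDl]
    exact S.sum_head_window (ρ1.1 v) (D v)
  set Sf : Finset S.V0 := Finset.univ.filter (fun v => k2 v < k1 v) with hSf
  have hSfne : Sf.Nonempty := ⟨u, Finset.mem_filter.mpr ⟨Finset.mem_univ _, hcon⟩⟩
  have hA1 : ∑ v ∈ Sf, k1 v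
      = (∑ v ∈ Sf, if w = v.1 then 1 else 0) + ∑ v' : S.V0, ∑ v ∈ Sf, AW1 v' v.1 := by
    calc ∑ v ∈ Sf, k1 v
        = ∑ v ∈ Sf, ((if w = v.1 then 1 else 0) + ∑ v' : S.V0, AW1 v' v.1) :=
          Finset.sum_congr rfl (fun v _ => hcount1 v)
      _ = (∑ v ∈ Sf, if w = v.1 then 1 else 0) + ∑ v ∈ Sf, ∑ v' : S.V0, AW1 v' v.1 :=
          Finset.sum_add_distrib
      _ = _ := by rw [Finset.sum_comm]
  have hA2 : ∑ v ∈ Sf, k2 v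
      = (∑ v ∈ Sf, if w = v.1 then 1 else 0) + ∑ v' : S.V0, ∑ v ∈ Sf, AW2 v' v.1 := by
    calc ∑ v ∈ Sf, k2 v
        = ∑ v ∈ Sf, ((if w = v.1 then 1 else 0) + ∑ v' : S.V0, AW2 v' v.1) :=
          Finset.sum_congr rfl (fun v _ => hcount2 v)
      _ = (∑ v ∈ Sf, if w = v.1 then 1 else 0) + ∑ v ∈ Sf, ∑ v' : S.V0, AW2 v' v.1 :=
          Finset.sum_add_distrib
      _ = _ := by rw [Finset.sum_comm]
  have hA3 : ∑ v ∈ Sf, k1 v = ∑ v ∈ Sf, k2 v + ∑ v ∈ Sf, D v := by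
    rw [← Finset.sum_add_distrib]
    refine Finset.sum_congr rfl (fun v hv => ?_)
    have hvS : k2 v < k1 v := (Finset.mem_filter.mp hv).2
    simp only [hD]
    omega
  have h4 : ∀ v' : S.V0, (∑ v ∈ Sf, AW1 v' v.1)
      ≤ (∑ v ∈ Sf, AW2 v' v.1) + (if k2 v' ≤ k1 v' then ∑ v ∈ Sf, Dl v' v.1 else 0) := by
    intro v'
    by_cases hc : k2 v' ≤ k1 v'
    · rw [if_pos hc]
      have he : ∑ v ∈ Sf, AW1 v' v.1 = ∑ v ∈ Sf, (Dl v' v.1 + AW2 v' v.1) :=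
        Finset.sum_congr rfl (fun v _ => hsplit v' hc v.1)
      rw [he, Finset.sum_add_distrib]
      omega
    · rw [if_neg hc, Nat.add_zero]
      push_neg at hc
      exact Finset.sum_le_sum (fun v _ => hsplitle v' (le_of_lt hc) v.1)
  have h5 : ∀ v' : S.V0, (if k2 v' ≤ k1 v' then ∑ v ∈ Sf, Dl v' v.1 else 0) ≤ D v' := by
    intro v'
    split
    · have himg : ∑ v ∈ Sf, Dl v' v.1 = ∑ x ∈ Sf.image (fun v => v.1), Dl v' x :=
        (Finset.sum_image (fun a _ b _ h => Subtype.ext h)).symm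
      rw [himg, ← hDlsum v']
      exact Finset.sum_le_sum_of_subset (Finset.subset_univ _)
    · exact Nat.zero_le _
  have h6 : ∑ v' : S.V0, D v' = ∑ v ∈ Sf, D v := by
    symm
    apply Finset.sum_subset (Finset.subset_univ _)
    intro x _ hx
    have : ¬ k2 x < k1 x := fun hc => hx (Finset.mem_filter.mpr ⟨Finset.mem_univ _, hc⟩)
    simp only [hD]
    omega
  have hmain : ∑ v' : S.V0, (if k2 v' ≤ k1 v' then ∑ v ∈ Sf, Dl v' v.1 else 0)
      = ∑ v' : S.V0, D v' := by
    have hle1 : ∑ v' : S.V0, ∑ v ∈ Sf, AW1 v' v.1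
        ≤ ∑ v' : S.V0, ∑ v ∈ Sf, AW2 v' v.1
          + ∑ v' : S.V0, (if k2 v' ≤ k1 v' then ∑ v ∈ Sf, Dl v' v.1 else 0) := by
      rw [← Finset.sum_add_distrib]
      exact Finset.sum_le_sum (fun v' _ => h4 v')
    have hle2 : ∑ v' : S.V0, (if k2 v' ≤ k1 v' then ∑ v ∈ Sf, Dl v' v.1 else 0)
        ≤ ∑ v' : S.V0, D v' := Finset.sum_le_sum (fun v' _ => h5 v')
    omega
  have hpt := (Finset.sum_eq_sum_iff_of_le (fun v' _ => h5 v')).mp hmain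
  have hclose : ∀ x ∈ Sf.image (fun v => v.1), ∃ x' ∈ Sf.image (fun v => v.1),
      S.rotorRel ρ2 x x' := by
    intro x hx
    obtain ⟨v, hv, rfl⟩ := Finset.mem_image.mp hx
    have hvS : k2 v < k1 v := (Finset.mem_filter.mp hv).2
    have hDv : 1 ≤ D v := by simp only [hD]; omega
    have heqv := hpt v (Finset.mem_univ v)
    rw [if_pos (le_of_lt hvS)] at heqv
    have hx0 : 1 ≤ Dl v (S.head (ρ2.1 v)) := by
      simp only [hDl]
      rw [Nat.succ_le_iff, Finset.card_pos]
      refine ⟨D v, Finset.mem_filter.mpr ⟨Finset.mem_Icc.mpr ⟨hDv, le_refl _⟩, ?_⟩⟩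
      have := hshift v (le_of_lt hvS)
      simp only [hD]
      rw [← this]
    have hout : ∀ x', x' ∉ Sf.image (fun v => v.1) → Dl v x' = 0 := by
      intro x' hx'
      by_contra hne
      have h7 : ∑ y ∈ Sf.image (fun v => v.1), Dl v y = D v := by
        rw [Finset.sum_image (fun a _ b _ h => Subtype.ext h)]
        exact heqv
      have h8 : ∑ y ∈ Finset.univ, Dl v y = D v := hDlsum v
      have h9 : ∑ y ∈ Sf.image (fun v => v.1), Dl v y < ∑ y ∈ Finset.univ, Dl v y :=
        Finset.sum_lt_sum_of_subset (Finset.subset_univ _) (Finset.mem_univ x') hx'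
          (by omega) (fun j _ _ => Nat.zero_le _)
      omega
    by_cases hmem : S.head (ρ2.1 v) ∈ Sf.image (fun v => v.1)
    · exact ⟨_, hmem, ⟨v.2, rfl⟩⟩
    · exact absurd (hout _ hmem) (by omega)
  obtain ⟨x, hcyc⟩ := exists_cycle_of_closed (S.rotorRel ρ2)
    (Sf.image (fun v => v.1)) (hSfne.image _) hclose
  exact hac2 x hcyc

/-- **Injectivity on acyclic configurations**: routing from the same vertex is
injective on acyclic rotor configurations. -/
lemma rt_inj {w : V} {ρ1 ρ2 : S.RConf} (h1 : S.IsAcyclicConf ρ1) (h2 : S.IsAcyclicConf ρ2)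
    (heq : (S.rt (w, ρ1)).2 = (S.rt (w, ρ2)).2) : ρ1 = ρ2 := by
  have hle1 := fun u => S.rt_le_aux h2 heq u
  have hle2 := fun u => S.rt_le_aux h1 heq.symm u
  apply Subtype.ext
  funext v
  have hk : S.cnt (w, ρ1) v.1 (S.hitT (w, ρ1)) = S.cnt (w, ρ2) v.1 (S.hitT (w, ρ2)) :=
    le_antisymm (hle1 v) (hle2 v)
  apply S.next_iterate_injective (S.cnt (w, ρ1) v.1 (S.hitT (w, ρ1)))
  have e1 : (S.rt (w, ρ1)).2.1 v
      = S.next^[S.cnt (w, ρ1) v.1 (S.hitT (w, ρ1))] (ρ1.1 v) := S.rotor_evol (w, ρ1) v _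
  have e2 : (S.rt (w, ρ2)).2.1 v
      = S.next^[S.cnt (w, ρ2) v.1 (S.hitT (w, ρ2))] (ρ2.1 v) := S.rotor_evol (w, ρ2) v _
  conv_lhs => rw [← e1]
  conv_rhs => rw [hk, ← e2]
  exact congrFun (congrArg Subtype.val heq) v

lemma addAt_acyclic (v : S.V0) {ρ : S.RConf} (h : S.IsAcyclicConf ρ) :
    S.IsAcyclicConf (S.addAt v ρ) := by
  rw [S.addAt_eq]
  exact S.rt_acyclic (s := (v.1, ρ)) h

lemma addAt_inj (v : S.V0) {ρ1 ρ2 : S.RConf} (h1 : S.IsAcyclicConf ρ1)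
    (h2 : S.IsAcyclicConf ρ2) (he : S.addAt v ρ1 = S.addAt v ρ2) : ρ1 = ρ2 := by
  rw [S.addAt_eq, S.addAt_eq] at he
  exact S.rt_inj h1 h2 he

lemma iter_addAt_acyclic (v : S.V0) (k : ℕ) {ρ : S.RConf} (h : S.IsAcyclicConf ρ) :
    S.IsAcyclicConf ((S.addAt v)^[k] ρ) := by
  induction k with
  | zero => exact h
  | succ k ih => rw [Function.iterate_succ_apply']; exact S.addAt_acyclic v ih

lemma iter_addAt_inj (v : S.V0) (k : ℕ) {ρ1 ρ2 : S.RConf} (h1 : S.IsAcyclicConf ρ1)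
    (h2 : S.IsAcyclicConf ρ2) (he : (S.addAt v)^[k] ρ1 = (S.addAt v)^[k] ρ2) : ρ1 = ρ2 := by
  induction k with
  | zero => exact he
  | succ k ih =>
    rw [Function.iterate_succ_apply', Function.iterate_succ_apply'] at he
    exact ih (S.addAt_inj v (S.iter_addAt_acyclic v k h1) (S.iter_addAt_acyclic v k h2) he)

lemma foldr_acyclic (σ : S.PConf) (L : List S.V0) {ρ : S.RConf} (h : S.IsAcyclicConf ρ) :
    S.IsAcyclicConf (L.foldr (fun v t => (S.addAt v)^[σ v] t) ρ) := by
  induction L with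
  | nil => exact h
  | cons v L ih => exact S.iter_addAt_acyclic v (σ v) ih

lemma foldr_inj (σ : S.PConf) (L : List S.V0) {ρ1 ρ2 : S.RConf} (h1 : S.IsAcyclicConf ρ1)
    (h2 : S.IsAcyclicConf ρ2)
    (he : L.foldr (fun v t => (S.addAt v)^[σ v] t) ρ1
      = L.foldr (fun v t => (S.addAt v)^[σ v] t) ρ2) : ρ1 = ρ2 := by
  induction L with
  | nil => exact he
  | cons v L ih =>
    rw [List.foldr_cons, List.foldr_cons] at he
    exact ih (S.iter_addAt_inj v (σ v) (S.foldr_acyclic σ L h1) (S.foldr_acyclic σ L h2) he)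

lemma act_acyclic (σ : S.PConf) {ρ : S.RConf} (h : S.IsAcyclicConf ρ) :
    S.IsAcyclicConf (S.act σ ρ) := S.foldr_acyclic σ _ h

lemma act_inj (σ : S.PConf) {ρ1 ρ2 : S.RConf} (h1 : S.IsAcyclicConf ρ1)
    (h2 : S.IsAcyclicConf ρ2) (he : S.act σ ρ1 = S.act σ ρ2) : ρ1 = ρ2 :=
  S.foldr_inj σ _ h1 h2 he
end Aux
end RotorSystem

/-- **Lemma (equivalence = common configuration accessible by cycle pushing).**
Two rotor configurations are equivalent if and only if some rotor configuration is
accessible from both by sequences of cycle pushing moves. -/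
theorem requiv_iff_common_cyclePush {V E : Type} [Fintype V] [DecidableEq V]
    [Fintype E] [DecidableEq E] (S : RotorSystem V E) (ρ₁ ρ₂ : S.RConf) :
    S.REquiv ρ₁ ρ₂ ↔
      ∃ ρ' : S.RConf, Relation.ReflTransGen S.IsCyclePush ρ₁ ρ' ∧
        Relation.ReflTransGen S.IsCyclePush ρ₂ ρ' := by
  constructor
  · rintro ⟨σ, hσ⟩
    obtain ⟨ρh₁, hr1, hac1⟩ := S.exists_acyclic_reduct ρ₁
    obtain ⟨ρh₂, hr2, hac2⟩ := S.exists_acyclic_reduct ρ₂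
    have hc1 : Relation.ReflTransGen S.IsCyclePush (S.act σ ρ₁) (S.act σ ρh₁) :=
      S.cpStar_act hr1 σ
    have hc2 : Relation.ReflTransGen S.IsCyclePush (S.act σ ρ₁) (S.act σ ρh₂) := by
      rw [hσ]
      exact S.cpStar_act hr2 σ
    have he1 : S.act 1 (S.act σ ρ₁) = S.act 1 (S.act σ ρh₁) := S.cpStar_act_one hc1
    have he2 : S.act 1 (S.act σ ρ₁) = S.act 1 (S.act σ ρh₂) := S.cpStar_act_one hc2
    have hY : S.act σ ρh₁ = S.act σ ρh₂ :=
      S.act_inj 1 (S.act_acyclic σ hac1) (S.act_acyclic σ hac2) (he1.symm.trans he2)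
    have hfinal : ρh₁ = ρh₂ := S.act_inj σ hac1 hac2 hY
    exact ⟨ρh₁, hr1, hfinal ▸ hr2⟩
  · rintro ⟨ρ', h1, h2⟩
    exact ⟨1, (S.cpStar_act_one h1).trans (S.cpStar_act_one h2).symm⟩
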